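/- Let A and B be nonempty subsets of a metric space (X,d). If the pair (A,B) has property WUC, then for every y ∈ B, lim_{ε→0} diam(A ∩ B̄(y, dist(A,B) + ε)) = 0, where B̄(y,r) is the closed ball of center y and radius r. -/

import Mathlib

open Filter Metric

/-- The distance between two sets: `inf {d(x,y) : x ∈ A, y ∈ B}`. -/
noncomputable def setDist {X : Type*} [PseudoMetricSpace X] (A B : Set X) : ℝ :=
  sInf (Set.image2 dist A B)

/-- Property WUC for a pair of subsets of a metric space. -/
def PropWUC {X : Type*} [MetricSpace X] (A B : Set X) : Prop :=
  ∀ x : ℕ → X, (∀ n, x n ∈ A) →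
    (∀ ε > (0 : ℝ), ∃ y ∈ B, ∃ m₀ : ℕ, ∀ m ≥ m₀, dist (x m) y ≤ setDist A B + ε) →
    ∃ z, Tendsto x atTop (nhds z)

theorem diam_tendsto_zero_of_prop_WUC {X : Type*} [MetricSpace X] (A B : Set X)
    (hA : A.Nonempty) (hB : B.Nonempty) (hWUC : PropWUC A B) :
    ∀ y ∈ B,
      Tendsto (fun ε : ℝ => Metric.diam (A ∩ Metric.closedBall y (setDist A B + ε)))
        (nhdsWithin 0 (Set.Ioi 0)) (nhds 0) := by
  intro y hy
  set d := setDist A B with hd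
  have key : ∀ δ > (0:ℝ), ∃ ε > (0:ℝ),
      ∀ x1 ∈ A ∩ Metric.closedBall y (d + ε),
      ∀ x2 ∈ A ∩ Metric.closedBall y (d + ε), dist x1 x2 ≤ δ := by
    intro δ hδ
    by_contra h
    push_neg at h
    choose a ha b hb hab using fun n : ℕ =>
      h (1 / (n + 1)) (by positivity)
    set x : ℕ → X := fun m => if m % 2 = 0 then a (m / 2) else b (m / 2) with hx
    have hxA : ∀ m, x m ∈ A := by
      intro m
      simp only [hx]
      split
      · exact (ha (m / 2)).1
      · exact (hb (m / 2)).1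
    have hxdist : ∀ m, dist (x m) y ≤ d + 1 / (m / 2 + 1 : ℕ) := by
      intro m
      simp only [hx]
      split
      · have := (ha (m / 2)).2
        rw [Metric.mem_closedBall] at this
        simpa using this
      · have := (hb (m / 2)).2
        rw [Metric.mem_closedBall] at this
        simpa using this
    have hcond : ∀ ε > (0:ℝ), ∃ y ∈ B, ∃ m₀ : ℕ, ∀ m ≥ m₀, dist (x m) y ≤ d + ε := by
      intro ε hε
      refine ⟨y, hy, ?_⟩
      obtain ⟨N, hNε⟩ := exists_nat_gt (1 / ε)
      refine ⟨2 * N, fun m hm => ?_⟩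
      have hle : (1 : ℝ) / (m / 2 + 1 : ℕ) ≤ ε := by
        have hmN : (N : ℝ) ≤ (m / 2 + 1 : ℕ) := by
          have : N ≤ m / 2 + 1 := by omega
          exact_mod_cast this
        have hpos : (0:ℝ) < (m / 2 + 1 : ℕ) := by positivity
        rw [div_le_iff₀ hpos]
        have h1 : 1 / ε < (m / 2 + 1 : ℕ) := lt_of_lt_of_le hNε hmN
        rw [div_lt_iff₀ hε] at h1
        nlinarith
      calc dist (x m) y ≤ d + 1 / (m / 2 + 1 : ℕ) := hxdist m
        _ ≤ d + ε := by linarith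
    obtain ⟨z, hz⟩ := hWUC x hxA hcond
    · have hcauchy : CauchySeq x := hz.cauchySeq
      rw [Metric.cauchySeq_iff] at hcauchy
      obtain ⟨N, hN⟩ := hcauchy δ hδ
      have h1 : x (2 * N) = a N := by
        simp [hx, Nat.mul_div_cancel_left, Nat.mul_mod_right]
      have h2 : x (2 * N + 1) = b N := by
        have hm : (2 * N + 1) % 2 = 1 := by omega
        have hdvd : (2 * N + 1) / 2 = N := by omega
        simp [hx, hm, hdvd]
      have := hN (2 * N) (by omega) (2 * N + 1) (by omega)
      rw [h1, h2] at this
      exact absurd this (not_lt.mpr (le_of_lt (hab N)))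
  rw [Metric.tendsto_nhdsWithin_nhds]
  intro δ hδ
  obtain ⟨ε, hε, hkey⟩ := key (δ / 2) (by positivity)
  refine ⟨ε, hε, fun ε' hε' hdε' => ?_⟩
  have hε'pos : (0:ℝ) < ε' := hε'
  have hε'le : ε' ≤ ε := by
    rw [Real.dist_eq, sub_zero, abs_of_pos hε'pos] at hdε'
    linarith
  have hsub : A ∩ Metric.closedBall y (d + ε') ⊆ A ∩ Metric.closedBall y (d + ε) :=
    Set.inter_subset_inter_right _ (Metric.closedBall_subset_closedBall (by linarith))
  have hdiam : Metric.diam (A ∩ Metric.closedBall y (d + ε')) ≤ δ / 2 :=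
    Metric.diam_le_of_forall_dist_le (by positivity)
      (fun x hx x' hx' => hkey x (hsub hx) x' (hsub hx'))
  rw [Real.dist_eq, sub_zero, abs_of_nonneg Metric.diam_nonneg]
  linarith
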